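/- In the AdaDiag ODE, any point (W, M, V) in the invariant set where dH/dt ≡ 0 along the trajectory must satisfy P(t)^T ∇L(W) = 0; since P(t) is full-rank orthogonal, this implies ∇L(W) = 0, i.e., all trajectories converge to stationary points of L. -/

import Mathlib

open Matrix

attribute [local instance] Matrix.frobeniusNormedAddCommGroup Matrix.frobeniusNormedSpace

/-- Frobenius inner product of matrices. -/
def mInner {m n : ℕ} (A B : Matrix (Fin m) (Fin n) ℝ) : ℝ :=
  ∑ i, ∑ j, A i j * B i j

theorem hasDerivAt_matrix {m n : ℕ} {f : ℝ → Matrix (Fin m) (Fin n) ℝ}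
    {f' : Matrix (Fin m) (Fin n) ℝ} {t : ℝ}
    (h : ∀ i j, HasDerivAt (fun s => f s i j) (f' i j) t) :
    HasDerivAt f f' t := by
  have key : ∀ (g : Matrix (Fin m) (Fin n) ℝ),
      (∑ i, ∑ j, (g i j) • Matrix.single i j (1:ℝ)) = g := by
    intro g
    conv_rhs => rw [matrix_eq_sum_single g]
    simp [smul_single]
  have h2 : HasDerivAt (fun s => ∑ i, ∑ j, (f s i j) • Matrix.single i j (1:ℝ))
      (∑ i, ∑ j, (f' i j) • Matrix.single i j (1:ℝ)) t :=
    HasDerivAt.fun_sum fun i _ => HasDerivAt.fun_sum fun j _ => (h i j).smul_const _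
  simpa only [key] using h2

theorem swap3 {m n : ℕ} (f : Fin m → Fin n → Fin m → ℝ) :
    ∑ i, ∑ j, ∑ k, f i j k = ∑ k, ∑ j, ∑ i, f i j k :=
  calc ∑ i, ∑ j, ∑ k, f i j k = ∑ j, ∑ i, ∑ k, f i j k := Finset.sum_comm
    _ = ∑ j, ∑ k, ∑ i, f i j k := Finset.sum_congr rfl fun _ _ => Finset.sum_comm
    _ = ∑ k, ∑ j, ∑ i, f i j k := Finset.sum_comm

theorem mInner_neg_mul {m n : ℕ} (P : Matrix (Fin m) (Fin m) ℝ)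
    (Gm : Matrix (Fin m) (Fin n) ℝ) (A : Matrix (Fin m) (Fin n) ℝ) :
    mInner Gm (-(P * A)) = -∑ k, ∑ j, (Pᵀ * Gm) k j * A k j := by
  simp only [mInner, mul_apply, Matrix.neg_apply, transpose_apply, Finset.mul_sum, Finset.sum_mul,
    mul_neg, Finset.sum_neg_distrib, neg_inj]
  rw [swap3 (fun i j k => Gm i j * (P i k * A k j))]
  refine Finset.sum_congr rfl fun k _ => Finset.sum_congr rfl fun j _ =>
    Finset.sum_congr rfl fun i _ => by ring

/-- In the AdaDiag ODE, any trajectory along which dH/dt ≡ 0 (i.e. lying in the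
invariant set) must satisfy P(t)ᵀ ∇L(W(t)) = 0 for all t; since P(t) is full-rank
orthogonal this gives ∇L(W(t)) = 0, i.e. the trajectory consists of stationary
points of L. -/
theorem adadiag_invariant_set_stationary {m n : ℕ}
    (L : Matrix (Fin m) (Fin n) ℝ → ℝ)
    (G : Matrix (Fin m) (Fin n) ℝ → Matrix (Fin m) (Fin n) ℝ)
    (l : Matrix (Fin m) (Fin n) ℝ → (Matrix (Fin m) (Fin n) ℝ →L[ℝ] ℝ))
    (hL : ∀ X, HasFDerivAt L (l X) X)
    (hl : ∀ X H, l X H = mInner (G X) H)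
    (ε : ℝ) (hε : 0 < ε)
    (P : ℝ → Matrix (Fin m) (Fin m) ℝ)
    (hP : ∀ t, P t * (P t)ᵀ = 1 ∧ (P t)ᵀ * P t = 1)
    (W M V : ℝ → Matrix (Fin m) (Fin n) ℝ)
    (hV : ∀ t i j, 0 < V t i j)
    (hW : ∀ t i j, HasDerivAt (fun s => W s i j)
      (-((P t * Matrix.of fun a b => M t a b / (Real.sqrt (V t a b) + ε)) i j)) t)
    (hM : ∀ t i j, HasDerivAt (fun s => M s i j)
      (((P t)ᵀ * G (W t)) i j - M t i j) t)
    (hVd : ∀ t i j, HasDerivAt (fun s => V s i j)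
      ((((P t)ᵀ * G (W t)) i j) ^ 2 - V t i j) t)
    (hstationary : ∀ t, HasDerivAt (fun s => L (W s) +
        (1 / 2) * mInner (Matrix.of fun i j => M s i j / (Real.sqrt (V s i j) + ε)) (M s))
        0 t) :
    ∀ t, (P t)ᵀ * G (W t) = 0 ∧ G (W t) = 0 := by
  -- Step 1: M ≡ 0
  have hM0 : ∀ t i j, M t i j = 0 := by
    intro t i j
    -- notation
    set g : Fin m → Fin n → ℝ := fun i j => ((P t)ᵀ * G (W t)) i j with hg
    -- derivative of L ∘ W
    have hWd : HasDerivAt W (-(P t * Matrix.of fun a b => M t a b / (Real.sqrt (V t a b) + ε))) t := by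
      apply hasDerivAt_matrix
      intro i j
      simpa using hW t i j
    have hLW : HasDerivAt (fun s => L (W s))
        (l (W t) (-(P t * Matrix.of fun a b => M t a b / (Real.sqrt (V t a b) + ε)))) t :=
      (hL (W t)).comp_hasDerivAt t hWd
    -- per-entry derivative of the second term
    have hφ : ∀ (i : Fin m) (j : Fin n),
        HasDerivAt (fun s => (M s i j / (Real.sqrt (V s i j) + ε)) * M s i j)
          ((((g i j - M t i j) * (Real.sqrt (V t i j) + ε)
              - M t i j * ((1 / (2 * Real.sqrt (V t i j))) * ((g i j) ^ 2 - V t i j)))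
              / (Real.sqrt (V t i j) + ε) ^ 2) * M t i j
            + (M t i j / (Real.sqrt (V t i j) + ε)) * (g i j - M t i j)) t := by
      intro i j
      have hs0 : (0:ℝ) < Real.sqrt (V t i j) := Real.sqrt_pos.2 (hV t i j)
      have hd : Real.sqrt (V t i j) + ε ≠ 0 := by positivity
      have hsq : HasDerivAt (fun s => Real.sqrt (V s i j))
          ((1 / (2 * Real.sqrt (V t i j))) * ((g i j) ^ 2 - V t i j)) t := by
        have := (Real.hasDerivAt_sqrt (hV t i j).ne').comp t (hVd t i j)
        simpa [Function.comp_def, hg] using this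
      exact ((hM t i j).div (hsq.add_const ε) hd).mul (hM t i j)
    -- derivative of H ∘ trajectory
    have hH : HasDerivAt (fun s => L (W s) +
        (1 / 2) * mInner (Matrix.of fun i j => M s i j / (Real.sqrt (V s i j) + ε)) (M s))
        (l (W t) (-(P t * Matrix.of fun a b => M t a b / (Real.sqrt (V t a b) + ε)))
          + (1 / 2) * ∑ i, ∑ j,
            ((((g i j - M t i j) * (Real.sqrt (V t i j) + ε)
              - M t i j * ((1 / (2 * Real.sqrt (V t i j))) * ((g i j) ^ 2 - V t i j)))
              / (Real.sqrt (V t i j) + ε) ^ 2) * M t i j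
            + (M t i j / (Real.sqrt (V t i j) + ε)) * (g i j - M t i j))) t := by
      refine hLW.add (HasDerivAt.const_mul _ ?_)
      have : (fun s => mInner (Matrix.of fun i j => M s i j / (Real.sqrt (V s i j) + ε)) (M s))
          = fun s => ∑ i, ∑ j, (M s i j / (Real.sqrt (V s i j) + ε)) * M s i j := by
        funext s; simp [mInner]
      rw [this]
      exact HasDerivAt.fun_sum fun i _ => HasDerivAt.fun_sum fun j _ => hφ i j
    have hzero := hH.unique (hstationary t)
    -- rewrite the first summand
    rw [hl] at hzero
    rw [mInner_neg_mul] at hzero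
    -- combine into a single double sum
    have hsum : ∑ i, ∑ j,
        (-(((P t)ᵀ * G (W t)) i j * (Matrix.of fun a b => M t a b / (Real.sqrt (V t a b) + ε)) i j)
          + (1/2) * ((((g i j - M t i j) * (Real.sqrt (V t i j) + ε)
              - M t i j * ((1 / (2 * Real.sqrt (V t i j))) * ((g i j) ^ 2 - V t i j)))
              / (Real.sqrt (V t i j) + ε) ^ 2) * M t i j
            + (M t i j / (Real.sqrt (V t i j) + ε)) * (g i j - M t i j))) = 0 := by
      rw [← hzero]
      simp only [Finset.sum_add_distrib, ← Finset.mul_sum, Finset.sum_neg_distrib]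
    -- each entry of the sum is nonpositive
    have hentry : ∀ (i : Fin m) (j : Fin n),
        (-(((P t)ᵀ * G (W t)) i j * (Matrix.of fun a b => M t a b / (Real.sqrt (V t a b) + ε)) i j)
          + (1/2) * ((((g i j - M t i j) * (Real.sqrt (V t i j) + ε)
              - M t i j * ((1 / (2 * Real.sqrt (V t i j))) * ((g i j) ^ 2 - V t i j)))
              / (Real.sqrt (V t i j) + ε) ^ 2) * M t i j
            + (M t i j / (Real.sqrt (V t i j) + ε)) * (g i j - M t i j)))
        = -((M t i j) ^ 2 * (3 * V t i j + 4 * Real.sqrt (V t i j) * ε + (g i j) ^ 2)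
            / (4 * Real.sqrt (V t i j) * (Real.sqrt (V t i j) + ε) ^ 2)) := by
      intro i j
      have hs0 : (0:ℝ) < Real.sqrt (V t i j) := Real.sqrt_pos.2 (hV t i j)
      have hd : (0:ℝ) < Real.sqrt (V t i j) + ε := by positivity
      have hv : Real.sqrt (V t i j) ^ 2 = V t i j := Real.sq_sqrt (hV t i j).le
      simp only [Matrix.of_apply, ← hg]
      rw [← hv]
      field_simp
      rw [Real.sqrt_sq hs0.le]
      ring
    have hsum2 : ∑ i, ∑ j, ((M t i j) ^ 2 * (3 * V t i j + 4 * Real.sqrt (V t i j) * ε + (g i j) ^ 2)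
            / (4 * Real.sqrt (V t i j) * (Real.sqrt (V t i j) + ε) ^ 2)) = 0 := by
      rw [Finset.sum_congr rfl fun i _ => Finset.sum_congr rfl fun j _ => hentry i j] at hsum
      simpa [Finset.sum_neg_distrib, neg_eq_zero] using hsum
    have hnonneg : ∀ (i : Fin m) (j : Fin n), 0 ≤ (M t i j) ^ 2 *
        (3 * V t i j + 4 * Real.sqrt (V t i j) * ε + (g i j) ^ 2)
          / (4 * Real.sqrt (V t i j) * (Real.sqrt (V t i j) + ε) ^ 2) := by
      intro i j
      have hs0 : (0:ℝ) < Real.sqrt (V t i j) := Real.sqrt_pos.2 (hV t i j)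
      have hv := hV t i j
      positivity
    have hij : (M t i j) ^ 2 * (3 * V t i j + 4 * Real.sqrt (V t i j) * ε + (g i j) ^ 2)
          / (4 * Real.sqrt (V t i j) * (Real.sqrt (V t i j) + ε) ^ 2) = 0 := by
      have h1 := (Finset.sum_eq_zero_iff_of_nonneg (fun i _ =>
        Finset.sum_nonneg (fun j _ => hnonneg i j))).1 hsum2 i (Finset.mem_univ i)
      exact (Finset.sum_eq_zero_iff_of_nonneg (fun j _ => hnonneg i j)).1 h1 j (Finset.mem_univ j)
    have hs0 : (0:ℝ) < Real.sqrt (V t i j) := Real.sqrt_pos.2 (hV t i j)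
    have hc : (0:ℝ) < 3 * V t i j + 4 * Real.sqrt (V t i j) * ε + (g i j) ^ 2 := by
      have hv := hV t i j; positivity
    have hden : (0:ℝ) < 4 * Real.sqrt (V t i j) * (Real.sqrt (V t i j) + ε) ^ 2 := by positivity
    have hnum : (M t i j) ^ 2 * (3 * V t i j + 4 * Real.sqrt (V t i j) * ε + (g i j) ^ 2) = 0 := by
      rcases div_eq_zero_iff.1 hij with h | h
      · exact h
      · exact absurd h hden.ne'
    have : (M t i j) ^ 2 = 0 := by
      rcases mul_eq_zero.1 hnum with h | h
      · exact h
      · exact absurd h hc.ne'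
    exact pow_eq_zero_iff (by norm_num) |>.1 this
  -- Step 2: PᵀG = 0
  have hPG : ∀ t, (P t)ᵀ * G (W t) = 0 := by
    intro t
    ext i j
    have h1 : HasDerivAt (fun s => M s i j) (((P t)ᵀ * G (W t)) i j - M t i j) t := hM t i j
    have h2 : HasDerivAt (fun s => M s i j) 0 t := by
      have : (fun s => M s i j) = fun _ => (0:ℝ) := funext fun s => hM0 s i j
      rw [this]; exact hasDerivAt_const t 0
    have := h1.unique h2
    simp only [Matrix.zero_apply]
    rw [hM0 t i j] at this
    linarith
  intro t
  refine ⟨hPG t, ?_⟩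
  have : G (W t) = P t * ((P t)ᵀ * G (W t)) := by
    rw [← Matrix.mul_assoc, (hP t).1, Matrix.one_mul]
  rw [this, hPG t, Matrix.mul_zero]
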